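/- For all real numbers u, v, w, z, the 4×4 real matrix M(u,v,w,z) with rows (u, u, v, w), (z, z, −v, −w), (−2w, 0, z−u, 0), (0, 2v, 0, u−z) has rank at most 3; moreover, there exist real numbers u, v, w, z for which the rank of M(u,v,w,z) is exactly 3. -/

import Mathlib

lemma aux_rank_le_three_of_det_zero {M : Matrix (Fin 4) (Fin 4) ℝ} (h : M.det = 0) :
    M.rank ≤ 3 := by
  obtain ⟨v, hv, hMv⟩ := (Matrix.exists_mulVec_eq_zero_iff).mpr h
  have hker : 0 < Module.finrank ℝ (LinearMap.ker M.mulVecLin) := by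
    rw [Module.finrank_pos_iff_exists_ne_zero]
    exact ⟨⟨v, by simpa using hMv⟩, by simpa using hv⟩
  have hrn := LinearMap.finrank_range_add_finrank_ker M.mulVecLin
  simp [Module.finrank_pi] at hrn
  rw [Matrix.rank]
  omega

lemma aux_li_rows :
    LinearIndependent ℝ (!![1,1,1,1; -2,0,-1,0; 0,2,0,1] : Matrix (Fin 3) (Fin 4) ℝ) := by
  refine Fintype.linearIndependent_iff.mpr ?_
  intro g hg
  have h0 := congrFun hg 0
  have h1 := congrFun hg 1
  have h2 := congrFun hg 2
  simp [Fin.sum_univ_three] at h0 h1 h2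
  intro i
  fin_cases i <;> simp <;> linarith

lemma aux_rank_ge :
    3 ≤ Matrix.rank (!![1,1,1,1; 0,0,-1,-1; -2,0,-1,0; 0,2,0,1] : Matrix (Fin 4) (Fin 4) ℝ) := by
  set B : Matrix (Fin 3) (Fin 4) ℝ := !![1,1,1,1; -2,0,-1,0; 0,2,0,1] with hB
  set M : Matrix (Fin 4) (Fin 4) ℝ := !![1,1,1,1; 0,0,-1,-1; -2,0,-1,0; 0,2,0,1] with hM
  have hBrank : B.rank = 3 := by
    have := aux_li_rows.rank_matrix (R := ℝ)
    simpa using this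
  have hsub : Set.range B ⊆ Set.range M := by
    rintro _ ⟨i, rfl⟩
    fin_cases i
    · exact ⟨0, by ext j; fin_cases j <;> norm_num [hB, hM]⟩
    · exact ⟨2, by ext j; fin_cases j <;> norm_num [hB, hM] <;> rfl⟩
    · exact ⟨3, by ext j; fin_cases j <;> norm_num [hB, hM] <;> rfl⟩
  calc 3 = B.rank := hBrank.symm
    _ = Module.finrank ℝ (Submodule.span ℝ (Set.range B)) := B.rank_eq_finrank_span_row
    _ ≤ Module.finrank ℝ (Submodule.span ℝ (Set.range M)) :=
        Submodule.finrank_mono (Submodule.span_mono hsub)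
    _ = M.rank := M.rank_eq_finrank_span_row.symm

theorem first_jet_matrix_rank :
    (∀ u v w z : ℝ,
      Matrix.rank !![u, u, v, w;
                     z, z, -v, -w;
                     -2*w, 0, z - u, 0;
                     0, 2*v, 0, u - z] ≤ 3) ∧
    (∃ u v w z : ℝ,
      Matrix.rank !![u, u, v, w;
                     z, z, -v, -w;
                     -2*w, 0, z - u, 0;
                     0, 2*v, 0, u - z] = 3) := by
  constructor
  · intro u v w z
    apply aux_rank_le_three_of_det_zero
    rw [Matrix.det_succ_row_zero]
    simp [Fin.sum_univ_succ, Matrix.det_fin_three, Fin.succAbove]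
    ring
  · refine ⟨1, 1, 1, 0, le_antisymm ?_ ?_⟩
    · apply aux_rank_le_three_of_det_zero
      rw [Matrix.det_succ_row_zero]
      simp [Fin.sum_univ_succ, Matrix.det_fin_three, Fin.succAbove]
      norm_num
    · have h := aux_rank_ge
      have : (!![1,1,1,1; 0,0,-1,-1; -2,0,-1,0; 0,2,0,1] : Matrix (Fin 4) (Fin 4) ℝ)
          = !![(1:ℝ), 1, 1, 1; 0, 0, -1, -1; -2*1, 0, 0-1, 0; 0, 2*1, 0, 1-0] := by
        norm_num
      rw [this] at h
      exact h
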